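/- Let T = ℝ²/ℤ², let f be the Dehn twist induced by [[1,1],[0,1]], let c = [(0,0),(1,0),(1,1)] − [(0,0),(0,1),(1,1)], and define τ_k = [(0,0),(1,0),(2^{2k}+1,0),(2^{2k}+1,1)] − [(0,0),(2^{2k},0),(2^{2k}+1,0),(2^{2k}+1,1)] + [(0,0),(2^{2k},0),(2^{2k},1),(2^{2k}+1,1)] and b_k = [(0,0),(1,0),(2^{2k}+1,0)] − [(0,0),(2^{2k},0),(2^{2k}+1,0)]. Then ∂τ_k + b_k = f^{2^{2k}}_*(c) − c. -/

import Mathlib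

open Filter Topology

noncomputable section

open Filter Topology

noncomputable section

abbrev SimplexT (n : ℕ) : Type := ↥(stdSimplex ℝ (Fin (n+1)))

abbrev Spx (X : Type) [TopologicalSpace X] (n : ℕ) : Type := C(SimplexT n, X)

abbrev SChain (X : Type) [TopologicalSpace X] (n : ℕ) : Type := Spx X n →₀ ℤ

/-- The `i`-th face inclusion of standard simplices. -/
def faceMap (n : ℕ) (i : Fin (n+2)) : C(SimplexT n, SimplexT (n+1)) where
  toFun x := ⟨i.insertNth 0 x.1, by
    refine ⟨fun j => ?_, ?_⟩
    · rcases eq_or_ne j i with h | h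
      · subst h; simp
      · obtain ⟨k, rfl⟩ := Fin.exists_succAbove_eq h
        simpa using x.2.1 k
    · rw [Fin.sum_univ_succAbove _ i]
      simpa using x.2.2⟩
  continuous_toFun := by
    apply Continuous.subtype_mk
    exact (continuous_const.finInsertNth i (continuous_subtype_val))

/-- Singular boundary operator. -/
def bdry {X : Type} [TopologicalSpace X] {n : ℕ} (c : SChain X (n+1)) : SChain X n :=
  c.sum fun σ a => ∑ i : Fin (n+2), (a * (-1)^(i:ℕ)) • Finsupp.single (σ.comp (faceMap n i)) (1:ℤ)

/-- ℓ¹-norm of an integral singular chain. -/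
def l1 {X : Type} [TopologicalSpace X] {n : ℕ} (c : SChain X n) : ℤ :=
  ∑ σ ∈ c.support, |c σ|

/-- Integral filling norm of a chain. -/
def fillNorm {X : Type} [TopologicalSpace X] {n : ℕ} (z : SChain X n) : ℝ :=
  sInf {r : ℝ | ∃ b : SChain X (n+1), bdry b = z ∧ (l1 b : ℝ) = r}

/-- Pushforward of singular chains along a continuous map. -/
def push {X Y : Type} [TopologicalSpace X] [TopologicalSpace Y] (f : C(X,Y)) {n : ℕ} :
    SChain X n → SChain Y n :=
  Finsupp.mapDomain fun σ => f.comp σ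
abbrev Circle1 : Type := AddCircle (1 : ℝ)
abbrev Torus : Type := Circle1 × Circle1

/-- quotient map ℝ² → T = ℝ²/ℤ² -/
def piT : C(ℝ × ℝ, Torus) :=
  ⟨fun p => ((p.1 : Circle1), (p.2 : Circle1)),
    ((continuous_quotient_mk').comp continuous_fst).prodMk
      ((continuous_quotient_mk').comp continuous_snd)⟩

/-- quotient map ℝ → S¹ = ℝ/ℤ -/
def piS : C(ℝ, Circle1) := ⟨fun x => (x : Circle1), continuous_quotient_mk'⟩

/-- straight simplex in ℝ² with given vertices, projected to the torus -/
def strT (n : ℕ) (p : Fin (n+1) → ℝ × ℝ) : Spx Torus n :=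
  piT.comp ⟨fun x => ∑ i, (x.1 i) • p i,
    continuous_finset_sum _ fun i _ =>
      ((continuous_apply i).comp continuous_subtype_val).smul continuous_const⟩

/-- straight simplex in ℝ with given vertices, projected to the circle -/
def strS (n : ℕ) (v : Fin (n+1) → ℝ) : Spx Circle1 n :=
  piS.comp ⟨fun y => ∑ i, (y.1 i) * v i,
    continuous_finset_sum _ fun i _ =>
      ((continuous_apply i).comp continuous_subtype_val).mul continuous_const⟩

/-- The self-map of the torus induced by the matrix [[1,1],[0,1]] (Dehn twist). -/
def dehnT : C(Torus, Torus) :=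
  ⟨fun q => (q.1 + q.2, q.2), by continuity⟩

/-- standard fundamental cycle of the torus -/
def stdCycle : SChain Torus 2 :=
  Finsupp.single (strT 2 ![(0,0),(1,0),(1,1)]) 1 - Finsupp.single (strT 2 ![(0,0),(0,1),(1,1)]) 1

/-- The prism chain `τ_k` of Step 1. -/
def tauChain (k : ℕ) : SChain Torus 3 :=
  Finsupp.single (strT 3 ![(0,0),(1,0),((2^(2*k) : ℝ)+1,0),((2^(2*k) : ℝ)+1,1)]) 1
    - Finsupp.single (strT 3 ![(0,0),((2^(2*k) : ℝ),0),((2^(2*k) : ℝ)+1,0),((2^(2*k) : ℝ)+1,1)]) 1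
    + Finsupp.single (strT 3 ![(0,0),((2^(2*k) : ℝ),0),((2^(2*k) : ℝ),1),((2^(2*k) : ℝ)+1,1)]) 1

/-- The chain `b_k` of Step 1, supported on the curve `y = 0`. -/
def bChain (k : ℕ) : SChain Torus 2 :=
  Finsupp.single (strT 2 ![(0,0),(1,0),((2^(2*k) : ℝ)+1,0)]) 1
    - Finsupp.single (strT 2 ![(0,0),((2^(2*k) : ℝ),0),((2^(2*k) : ℝ)+1,0)]) 1
lemma coe_int_zero (a : ℤ) : ((a : ℝ) : Circle1) = 0 := by
  rw [AddCircle.coe_eq_zero_iff]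
  exact ⟨a, by simp⟩

lemma piT_add_int (q : ℝ × ℝ) (a b : ℤ) : piT (q.1 + (a:ℝ), q.2 + (b:ℝ)) = piT q := by
  simp only [piT, ContinuousMap.coe_mk, Prod.mk.injEq]
  constructor <;> · rw [QuotientAddGroup.mk_add, coe_int_zero]; simp

lemma strT_translate (n : ℕ) (p : Fin (n+1) → ℝ × ℝ) (a b : ℤ) :
    strT n (fun i => ((p i).1 + (a:ℝ), (p i).2 + (b:ℝ))) = strT n p := by
  refine ContinuousMap.ext fun x => ?_
  show piT _ = piT _
  have hx : ∑ i, x.1 i = 1 := x.2.2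
  have h : (∑ i, (x.1 i) • ((p i).1 + (a:ℝ), (p i).2 + (b:ℝ)))
      = ((∑ i, (x.1 i) • p i).1 + (a:ℝ), (∑ i, (x.1 i) • p i).2 + (b:ℝ)) := by
    rw [Prod.ext_iff]
    simp [Prod.fst_sum, Prod.snd_sum, smul_eq_mul, mul_add, Finset.sum_add_distrib,
      ← Finset.sum_mul, hx]
  show piT (∑ i, (x.1 i) • ((p i).1 + (a:ℝ), (p i).2 + (b:ℝ))) = piT (∑ i, (x.1 i) • p i)
  rw [h, piT_add_int]
lemma strT_comp_face (n : ℕ) (p : Fin (n+2) → ℝ × ℝ) (i : Fin (n+2)) :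
    (strT (n+1) p).comp (faceMap n i) = strT n (p ∘ i.succAbove) := by
  refine ContinuousMap.ext fun x => ?_
  show piT (∑ j, ((faceMap n i x).1 j) • p j) = piT (∑ j, (x.1 j) • (p (i.succAbove j)))
  congr 1
  rw [Fin.sum_univ_succAbove _ i]
  simp [faceMap]

lemma dehnT_comp_strT (n : ℕ) (p : Fin (n+1) → ℝ × ℝ) :
    dehnT.comp (strT n p) = strT n (fun i => ((p i).1 + (p i).2, (p i).2)) := by
  refine ContinuousMap.ext fun x => ?_
  show dehnT (piT (∑ i, (x.1 i) • p i)) = piT (∑ i, (x.1 i) • ((p i).1 + (p i).2, (p i).2))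
  have h : (∑ i, (x.1 i) • ((p i).1 + (p i).2, (p i).2))
      = ((∑ i, (x.1 i) • p i).1 + (∑ i, (x.1 i) • p i).2, (∑ i, (x.1 i) • p i).2) := by
    rw [Prod.ext_iff]
    simp [Prod.fst_sum, Prod.snd_sum, smul_eq_mul, mul_add, Finset.sum_add_distrib]
  rw [h]
  simp only [dehnT, piT, ContinuousMap.coe_mk]
  rw [Prod.mk.injEq]
  exact ⟨rfl, rfl⟩
lemma bdry_single {X : Type} [TopologicalSpace X] {n : ℕ} (σ : Spx X (n+1)) (a : ℤ) :
    bdry (Finsupp.single σ a)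
      = ∑ i : Fin (n+2), (a * (-1)^(i:ℕ)) • Finsupp.single (σ.comp (faceMap n i)) (1:ℤ) := by
  rw [bdry, Finsupp.sum_single_index]
  simp

lemma bdry_add {X : Type} [TopologicalSpace X] {n : ℕ} (x y : SChain X (n+1)) :
    bdry (x + y) = bdry x + bdry y := by
  unfold bdry
  rw [Finsupp.sum_add_index']
  · intro σ; simp
  · intro σ a b; rw [← Finset.sum_add_distrib]
    congr 1; funext i; rw [← add_smul]; ring_nf

lemma bdry_neg {X : Type} [TopologicalSpace X] {n : ℕ} (x : SChain X (n+1)) :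
    bdry (-x) = - bdry x := by
  have := bdry_add x (-x)
  simp only [add_neg_cancel] at this
  have h0 : bdry (0 : SChain X (n+1)) = 0 := by
    unfold bdry; simp
  rw [h0] at this
  exact (neg_eq_of_add_eq_zero_right this.symm).symm
lemma bdry_sub {X : Type} [TopologicalSpace X] {n : ℕ} (x y : SChain X (n+1)) :
    bdry (x - y) = bdry x - bdry y := by
  rw [sub_eq_add_neg, bdry_add, bdry_neg, sub_eq_add_neg]

lemma push_single {X Y : Type} [TopologicalSpace X] [TopologicalSpace Y] (f : C(X,Y)) {n : ℕ}
    (σ : Spx X n) (a : ℤ) : push f (Finsupp.single σ a) = Finsupp.single (f.comp σ) a :=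
  Finsupp.mapDomain_single

lemma push_iter_single (m : ℕ) (p : Fin 3 → ℝ × ℝ) (a : ℤ) :
    (push dehnT)^[m] (Finsupp.single (strT 2 p) a)
      = Finsupp.single (strT 2 (fun i => ((p i).1 + (m:ℝ) * (p i).2, (p i).2))) a := by
  induction m with
  | zero =>
      simp only [Function.iterate_zero, id_eq, Nat.cast_zero, zero_mul, add_zero]
  | succ m ih =>
      rw [Function.iterate_succ_apply', ih, push_single, dehnT_comp_strT]
      congr 1
      congr 1
      funext i
      rw [Prod.mk.injEq]
      constructor
      · push_cast; ring
      · rfl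
section
variable {α : Type*}
lemma sa0 (A B C D : α) : ![A,B,C,D] ∘ @Fin.succAbove (2+1) (0 : Fin (2+2)) = ![B,C,D] := by
  funext j; fin_cases j <;> rfl
lemma sa1 (A B C D : α) : ![A,B,C,D] ∘ @Fin.succAbove (2+1) (1 : Fin (2+2)) = ![A,C,D] := by
  funext j; fin_cases j <;> rfl
lemma sa2 (A B C D : α) : ![A,B,C,D] ∘ @Fin.succAbove (2+1) (2 : Fin (2+2)) = ![A,B,D] := by
  funext j; fin_cases j <;> rfl
lemma sa3 (A B C D : α) : ![A,B,C,D] ∘ @Fin.succAbove (2+1) (3 : Fin (2+2)) = ![A,B,C] := by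
  funext j; fin_cases j <;> rfl
end
lemma strT_shift1 (n : ℕ) (p : Fin (n+1) → ℝ × ℝ) (a : ℤ) :
    strT n (fun i => ((p i).1 + (a:ℝ), (p i).2)) = strT n p := by
  simpa using strT_translate n p a 0

lemma push_iter_add (m : ℕ) (x y : SChain Torus 2) :
    (push dehnT)^[m] (x + y) = (push dehnT)^[m] x + (push dehnT)^[m] y := by
  induction m with
  | zero => simp
  | succ m ih => rw [Function.iterate_succ_apply', ih]; unfold push; rw [Finsupp.mapDomain_add, Function.iterate_succ_apply', Function.iterate_succ_apply']

lemma push_iter_stdCycle (m : ℕ) :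
    (push dehnT)^[m] stdCycle
      = Finsupp.single (strT 2 ![(0,0),(1,0),((m:ℝ)+1,1)]) 1
        - Finsupp.single (strT 2 ![(0,0),((m:ℝ),1),((m:ℝ)+1,1)]) 1 := by
  have h1 : (fun i => ((![((0:ℝ),(0:ℝ)),(1,0),(1,1)] i).1 + (m:ℝ) * (![((0:ℝ),(0:ℝ)),(1,0),(1,1)] i).2, (![((0:ℝ),(0:ℝ)),(1,0),(1,1)] i).2))
      = ![(0,0),(1,0),((m:ℝ)+1,1)] := by
    funext i; fin_cases i <;> norm_num [add_comm]
  have h2 : (fun i => ((![((0:ℝ),(0:ℝ)),(0,1),(1,1)] i).1 + (m:ℝ) * (![((0:ℝ),(0:ℝ)),(0,1),(1,1)] i).2, (![((0:ℝ),(0:ℝ)),(0,1),(1,1)] i).2))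
      = ![(0,0),((m:ℝ),1),((m:ℝ)+1,1)] := by
    funext i; fin_cases i <;> norm_num [add_comm]
  rw [stdCycle, sub_eq_add_neg, ← Finsupp.single_neg, push_iter_add,
    push_iter_single, push_iter_single, h1, h2, Finsupp.single_neg, ← sub_eq_add_neg]
lemma sum4 {M : Type*} [AddCommMonoid M] (f : Fin (2+2) → M) :
    ∑ i, f i = f 0 + f 1 + f 2 + f 3 := Fin.sum_univ_four f

/-- Step 1: `∂τ_k + b_k = f^{2^{2k}}_* c - c`, where `f` is the Dehn twist induced by
`[[1,1],[0,1]]` and `c` is the standard fundamental cycle of the torus. -/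
theorem bdry_tauChain_add_bChain (k : ℕ) :
    bdry (tauChain k) + bChain k = (push dehnT)^[2^(2*k)] stdCycle - stdCycle := by
  have h1 : strT 2 ![((1:ℝ),(0:ℝ)),((2^(2*k):ℝ)+1,0),((2^(2*k):ℝ)+1,1)]
      = strT 2 ![(0,0),((2^(2*k):ℝ),0),((2^(2*k):ℝ),1)] := by
    rw [← strT_shift1 2 ![(0,0),((2^(2*k):ℝ),0),((2^(2*k):ℝ),1)] 1]
    congr 1; funext i; fin_cases i <;> norm_num [add_comm]
  have h2 : strT 2 ![((2^(2*k):ℝ),(0:ℝ)),((2^(2*k):ℝ)+1,0),((2^(2*k):ℝ)+1,1)]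
      = strT 2 ![(0,0),(1,0),(1,1)] := by
    rw [← strT_shift1 2 ![(0,0),(1,0),(1,1)] (2^(2*k):ℤ)]
    congr 1; funext i; fin_cases i <;> push_cast <;> norm_num [add_comm]
  have h3 : strT 2 ![((2^(2*k):ℝ),(0:ℝ)),((2^(2*k):ℝ),1),((2^(2*k):ℝ)+1,1)]
      = strT 2 ![(0,0),(0,1),(1,1)] := by
    rw [← strT_shift1 2 ![(0,0),(0,1),(1,1)] (2^(2*k):ℤ)]
    congr 1; funext i; fin_cases i <;> push_cast <;> norm_num [add_comm]
  have hm : ((2^(2*k):ℕ):ℝ) = (2^(2*k):ℝ) := by push_cast; ring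
  rw [push_iter_stdCycle, hm]
  rw [tauChain, bChain, bdry_add, bdry_sub, bdry_single, bdry_single, bdry_single]
  simp only [sum4, strT_comp_face]
  rw [sa0, sa1, sa2, sa3, sa0, sa1, sa2, sa3, sa0, sa1, sa2, sa3]
  rw [h1, h2, h3, stdCycle]
  have c0 : (1 * (-1:ℤ)^(((0:Fin (2+2))):ℕ)) = 1 := by decide
  have c1 : (1 * (-1:ℤ)^(((1:Fin (2+2))):ℕ)) = -1 := by decide
  have c2 : (1 * (-1:ℤ)^(((2:Fin (2+2))):ℕ)) = 1 := by decide
  have c3 : (1 * (-1:ℤ)^(((3:Fin (2+2))):ℕ)) = -1 := by decide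
  rw [c0, c1, c2, c3]
  simp only [one_smul, neg_smul]
  abel
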